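/- Let π : {1,…,N} → I assign each index to a block. Suppose M ∈ ℝ^{N×N} satisfies M = Σ_{e∈E} M_e for a finite family of symmetric positive semidefinite matrices M_e, where for each e there exist two blocks i_e, j_e ∈ I such that (M_e)_{kl} = 0 unless both π(k) ∈ {i_e, j_e} and π(l) ∈ {i_e, j_e}. Define Ω ∈ ℝ^{N×N} by Ω_{ij} = 2·M_{ij} if π(i) = π(j) and Ω_{ij} = 0 otherwise (the block-diagonal part of 2M with respect to π). Then Ω − M is positive semidefinite. -/

import Mathlib

open Matrix

private lemma aux_sum_mulVec {N : ℕ} {E : Type*} [Fintype E]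
    (B : E → Matrix (Fin N) (Fin N) ℝ) (x : Fin N → ℝ) :
    (∑ e, B e) *ᵥ x = ∑ e, (B e) *ᵥ x := by
  ext k
  simp only [mulVec, dotProduct, Matrix.sum_apply, Finset.sum_mul, Finset.sum_apply]
  exact Finset.sum_comm

private lemma aux_dot_sum {N : ℕ} {E : Type*} [Fintype E]
    (f : E → Fin N → ℝ) (x : Fin N → ℝ) :
    x ⬝ᵥ (∑ e, f e) = ∑ e, x ⬝ᵥ f e := by
  simp only [dotProduct, Finset.sum_apply, Finset.mul_sum]
  exact Finset.sum_comm

private lemma aux_edge {N : ℕ} {I : Type*} [DecidableEq I] (π : Fin N → I)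
    (A : Matrix (Fin N) (Fin N) ℝ) (i j : I) (hA : A.PosSemidef)
    (hsupp : ∀ k l, A k l ≠ 0 → (π k = i ∨ π k = j) ∧ (π l = i ∨ π l = j))
    (x : Fin N → ℝ) :
    0 ≤ x ⬝ᵥ ((Matrix.of fun k l => if π k = π l then 2 * A k l else 0) - A) *ᵥ x := by
  have key : x ⬝ᵥ ((Matrix.of fun k l => if π k = π l then 2 * A k l else 0) - A) *ᵥ x
      = (fun k => if π k = i then x k else if π k = j then -x k else 0) ⬝ᵥ
        A *ᵥ (fun k => if π k = i then x k else if π k = j then -x k else 0) := by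
    simp only [dotProduct, mulVec, Matrix.sub_apply, of_apply, Finset.mul_sum]
    refine Finset.sum_congr rfl fun k _ => Finset.sum_congr rfl fun l _ => ?_
    by_cases hkl : A k l = 0
    · by_cases h : π k = π l <;> simp [hkl, h]
    · obtain ⟨hk, hl⟩ := hsupp k l hkl
      split_ifs <;> first | ring1 | (exfalso; simp_all)
  rw [key]
  simpa using hA.dotProduct_mulVec_nonneg (fun k => if π k = i then x k else if π k = j then -x k else 0)

/-- If `M = Σ_{e∈E} M_e` with each `M_e` positive semidefinite and supported on (at most)
two blocks `i_e`, `j_e` of the partition `π`, then the block-diagonal part `Ω` of `2M`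
with respect to `π` satisfies `Ω − M ⪰ 0`. -/
theorem blockDiag_double_sub_posSemidef {N : ℕ} {I E : Type*} [Fintype E] [DecidableEq I]
    (π : Fin N → I)
    (Me : E → Matrix (Fin N) (Fin N) ℝ)
    (ie je : E → I)
    (hpsd : ∀ e, (Me e).PosSemidef)
    (hsupp : ∀ e, ∀ k l : Fin N, Me e k l ≠ 0 →
      (π k = ie e ∨ π k = je e) ∧ (π l = ie e ∨ π l = je e))
    (M : Matrix (Fin N) (Fin N) ℝ) (hM : M = ∑ e, Me e)
    (Ω : Matrix (Fin N) (Fin N) ℝ)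
    (hΩ : ∀ i j : Fin N, Ω i j = if π i = π j then 2 * M i j else 0) :
    (Ω - M).PosSemidef := by
  have hMH : ∀ k l, M l k = M k l := by
    intro k l
    rw [hM]
    simp only [Matrix.sum_apply]
    refine Finset.sum_congr rfl fun e _ => ?_
    simpa using (hpsd e).1.apply k l
  have hsum : Ω - M = ∑ e,
      ((Matrix.of fun k l => if π k = π l then 2 * Me e k l else 0) - Me e) := by
    ext k l
    simp only [Matrix.sub_apply, Matrix.sum_apply, of_apply, hΩ k l, hM]
    by_cases h : π k = π l
    · simp [h, Finset.mul_sum, Finset.sum_sub_distrib]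
    · simp [h, Finset.sum_sub_distrib]
  refine Matrix.PosSemidef.of_dotProduct_mulVec_nonneg ?_ ?_
  · ext k l
    simp only [conjTranspose_apply, Matrix.sub_apply, star_trivial, hΩ k l, hΩ l k]
    by_cases h : π k = π l
    · rw [if_pos h, if_pos h.symm, hMH k l]
    · rw [if_neg h, if_neg (fun h' => h h'.symm), hMH k l]
  · intro x
    rw [hsum, aux_sum_mulVec, aux_dot_sum]
    simpa using Finset.sum_nonneg fun e _ =>
      aux_edge π (Me e) (ie e) (je e) (hpsd e) (hsupp e) x
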